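/- Let $\tilde Q=(q_{i,j})$ be as in the nega-$\tilde Q$ setup with all $m_n<\infty$, and suppose $q_{0,n}=q_0$ and $q_{m_n,n}=q_m$ for all $n>1$, with $q_{0,1}=q_1$, $q_{m_1,1}=q_2$, and $0<q_0,q_m,q_1,q_2<1$. Then $t'_0 = q_2\left(1-\frac{(1-q_m)q_0}{1-q_0 q_m}\right) - 1$ and $t''_0 = \frac{1-q_m}{1-q_0 q_m}\, q_1$, where $t'_0$ is the sum of the nega-$\tilde Q$ series for the digit sequence $(m_1,0,m_3,0,\dots)$ and $t''_0$ that for $(0,m_2,0,m_4,\dots)$. -/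

import Mathlib

/-- Partial column sum a_(i,k). -/
noncomputable def colA (q : ℕ → ℕ → ℝ) (i k : ℕ) : ℝ := ∑ t ∈ Finset.range i, q t k

/-- Value of the (analytic) nega-Q-tilde series for digit sequence I. -/
noncomputable def negaQVal (q : ℕ → ℕ → ℝ) (I : ℕ → ℕ) : ℝ :=
  ∑' k : ℕ, ((-1 : ℝ)) ^ (k + 1) * colA q (I (k + 1)) (k + 1) *
    ∏ j ∈ Finset.Icc 1 k, q (I j) j

/-- explicit values of t'0 and t''0 when the extreme entries of the
matrix are constant from the second column on. -/
theorem negaQ_extrema_explicit (m : ℕ → ℕ) (q : ℕ → ℕ → ℝ)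
    (hpos : ∀ j, 1 ≤ j → ∀ i, i ≤ m j → 0 < q i j)
    (hsum : ∀ j, 1 ≤ j → ∑ i ∈ Finset.range (m j + 1), q i j = 1)
    (q0 qm q1 q2 : ℝ)
    (hq0 : 0 < q0) (hq0' : q0 < 1) (hqm : 0 < qm) (hqm' : qm < 1)
    (hq1 : 0 < q1) (hq1' : q1 < 1) (hq2 : 0 < q2) (hq2' : q2 < 1)
    (h0 : ∀ n, 1 < n → q 0 n = q0) (hmn : ∀ n, 1 < n → q (m n) n = qm)
    (h01 : q 0 1 = q1) (hm1 : q (m 1) 1 = q2) :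
    negaQVal q (fun k => if Odd k then m k else 0)
      = q2 * (1 - ((1 - qm) * q0) / (1 - q0 * qm)) - 1 ∧
    negaQVal q (fun k => if Odd k then 0 else m k)
      = (1 - qm) / (1 - q0 * qm) * q1 := by
  have hr0 : (0:ℝ) ≤ q0 * qm := by positivity
  have hr1 : q0 * qm < 1 := by nlinarith
  have hrne : (1 : ℝ) - q0 * qm ≠ 0 := by nlinarith
  have hA : ∀ j, 1 ≤ j → colA q (m j) j = 1 - q (m j) j := by
    intro j hj
    have := hsum j hj
    rw [Finset.sum_range_succ] at this
    unfold colA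
    linarith
  have hcol0 : ∀ j, colA q 0 j = 0 := by intro j; simp [colA]
  constructor
  · -- first digit sequence
    set I : ℕ → ℕ := fun k => if Odd k then m k else 0 with hI
    set f : ℕ → ℝ := fun k =>
      ((-1 : ℝ)) ^ (k + 1) * colA q (I (k + 1)) (k + 1) * ∏ j ∈ Finset.Icc 1 k, q (I j) j
      with hf
    have hIodd : ∀ k, Odd k → I k = m k := by intro k hk; simp [hI, hk]
    have hIeven : ∀ k, ¬ Odd k → I k = 0 := by intro k hk; simp [hI, hk]
    have hP : ∀ ℓ, ∏ j ∈ Finset.Icc 1 (2*ℓ+2), q (I j) j = q2 * q0 * (q0*qm)^ℓ := by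
      intro ℓ
      induction ℓ with
      | zero =>
        rw [show 2*0+2 = 1+1 by norm_num, Finset.prod_Icc_succ_top (by norm_num),
          Finset.Icc_self, Finset.prod_singleton]
        rw [hIodd 1 (by decide), hIeven 2 (by decide), hm1, h0 2 (by norm_num)]
        ring
      | succ n ih =>
        rw [show 2*(n+1)+2 = (2*n+3)+1 by ring, Finset.prod_Icc_succ_top (by omega),
          show 2*n+3 = (2*n+2)+1 by ring, Finset.prod_Icc_succ_top (by omega), ih]
        rw [hIodd (2*n+2+1) ⟨n+1, by ring⟩, hIeven (2*n+2+1+1) (by simp [Nat.odd_iff, Nat.add_mod]),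
          hmn _ (by omega), h0 _ (by omega)]
        ring
    have hfodd : ∀ ℓ, f (2*ℓ+1) = 0 := by
      intro ℓ
      have : I (2*ℓ+1+1) = 0 := hIeven _ (by simp [Nat.odd_iff, Nat.add_mod])
      simp [hf, this, hcol0]
    have hf0 : f 0 = -(1 - q2) := by
      have h1 : I 1 = m 1 := hIodd 1 (by decide)
      simp [hf, h1, hA 1 le_rfl, hm1]
    have hfeven : ∀ ℓ, f (2*(ℓ+1)) = (-(1-qm)*q2*q0) * (q0*qm)^ℓ := by
      intro ℓ
      have hodd : Odd (2*(ℓ+1)+1) := ⟨ℓ+1, by ring⟩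
      have h1 : I (2*(ℓ+1)+1) = m (2*(ℓ+1)+1) := hIodd _ hodd
      have h2 : colA q (m (2*(ℓ+1)+1)) (2*(ℓ+1)+1) = 1 - qm := by
        rw [hA _ (by omega), hmn _ (by omega)]
      have h3 : ((-1:ℝ)) ^ (2*(ℓ+1)+1) = -1 := Odd.neg_one_pow hodd
      have h4 : (2*(ℓ+1)) = 2*ℓ+2 := by ring
      rw [hf]
      simp only [h4]
      rw [show 2*ℓ+2+1 = 2*(ℓ+1)+1 by ring, h1, h2, h3, hP ℓ]
      ring
    have hse' : Summable (fun ℓ => f (2*(ℓ+1))) := by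
      have := (summable_geometric_of_lt_one hr0 hr1).mul_left (-(1-qm)*q2*q0)
      simpa [hfeven] using this
    have hse : Summable (fun ℓ => f (2*ℓ)) := by
      exact (summable_nat_add_iff 1).mp hse'
    have hso : Summable (fun ℓ => f (2*ℓ+1)) := by
      simpa [hfodd] using summable_zero
    have key : negaQVal q I = ∑' ℓ, f (2*ℓ) + ∑' ℓ, f (2*ℓ+1) :=
      (tsum_even_add_odd hse hso).symm
    rw [key]
    have h5 : ∑' ℓ, f (2*ℓ+1) = 0 := by simp [hfodd]
    have h6 : ∑' ℓ, f (2*ℓ) = f 0 + ∑' ℓ, f (2*(ℓ+1)) := by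
      rw [Summable.tsum_eq_zero_add hse]
    have h7 : ∑' ℓ, f (2*(ℓ+1)) = (-(1-qm)*q2*q0) * (1 - q0*qm)⁻¹ := by
      calc ∑' ℓ, f (2*(ℓ+1)) = ∑' ℓ, (-(1-qm)*q2*q0) * (q0*qm)^ℓ := tsum_congr hfeven
        _ = (-(1-qm)*q2*q0) * (1 - q0*qm)⁻¹ := by
            rw [tsum_mul_left, tsum_geometric_of_lt_one hr0 hr1]
    rw [h5, h6, h7, hf0]
    field_simp
    ring
  · -- second digit sequence
    set I : ℕ → ℕ := fun k => if Odd k then 0 else m k with hI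
    set f : ℕ → ℝ := fun k =>
      ((-1 : ℝ)) ^ (k + 1) * colA q (I (k + 1)) (k + 1) * ∏ j ∈ Finset.Icc 1 k, q (I j) j
      with hf
    have hIodd : ∀ k, Odd k → I k = 0 := by intro k hk; simp [hI, hk]
    have hIeven : ∀ k, ¬ Odd k → I k = m k := by intro k hk; simp [hI, hk]
    have hP : ∀ ℓ, ∏ j ∈ Finset.Icc 1 (2*ℓ+1), q (I j) j = q1 * (q0*qm)^ℓ := by
      intro ℓ
      induction ℓ with
      | zero =>
        rw [show 2*0+1 = 1 by norm_num, Finset.Icc_self, Finset.prod_singleton]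
        rw [hIodd 1 (by decide), h01]; ring
      | succ n ih =>
        rw [show 2*(n+1)+1 = (2*n+2)+1 by ring, Finset.prod_Icc_succ_top (by omega),
          show 2*n+2 = (2*n+1)+1 by ring, Finset.prod_Icc_succ_top (by omega), ih]
        rw [hIeven (2*n+1+1) (by simp [Nat.odd_iff, Nat.add_mod]),
          hIodd (2*n+1+1+1) ⟨n+1, by ring⟩, hmn _ (by omega), h0 _ (by omega)]
        ring
    have hfeven : ∀ ℓ, f (2*ℓ) = 0 := by
      intro ℓ
      have : I (2*ℓ+1) = 0 := hIodd _ ⟨ℓ, by ring⟩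
      simp [hf, this, hcol0]
    have hfodd : ∀ ℓ, f (2*ℓ+1) = ((1-qm)*q1) * (q0*qm)^ℓ := by
      intro ℓ
      have hkeven : ¬ Odd (2*ℓ+1+1) := by simp [Nat.odd_iff, Nat.add_mod]
      have h1 : I (2*ℓ+1+1) = m (2*ℓ+1+1) := hIeven _ hkeven
      have h2 : colA q (m (2*ℓ+1+1)) (2*ℓ+1+1) = 1 - qm := by
        rw [hA _ (by omega), hmn _ (by omega)]
      have h3 : ((-1:ℝ)) ^ (2*ℓ+1+1) = 1 := by
        rw [show 2*ℓ+1+1 = 2*(ℓ+1) by ring]; simp [pow_mul]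
      rw [hf]
      simp only []
      rw [h1, h2, h3, hP ℓ]
      ring
    have hso : Summable (fun ℓ => f (2*ℓ+1)) := by
      have := (summable_geometric_of_lt_one hr0 hr1).mul_left ((1-qm)*q1)
      simpa [hfodd] using this
    have hse : Summable (fun ℓ => f (2*ℓ)) := by
      simpa [hfeven] using summable_zero
    have key : negaQVal q I = ∑' ℓ, f (2*ℓ) + ∑' ℓ, f (2*ℓ+1) :=
      (tsum_even_add_odd hse hso).symm
    rw [key]
    have h5 : ∑' ℓ, f (2*ℓ) = 0 := by simp [hfeven]
    have h7 : ∑' ℓ, f (2*ℓ+1) = ((1-qm)*q1) * (1 - q0*qm)⁻¹ := by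
      calc ∑' ℓ, f (2*ℓ+1) = ∑' ℓ, ((1-qm)*q1) * (q0*qm)^ℓ := tsum_congr hfodd
        _ = ((1-qm)*q1) * (1 - q0*qm)⁻¹ := by
            rw [tsum_mul_left, tsum_geometric_of_lt_one hr0 hr1]
    rw [h5, h7]
    field_simp
    ring
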